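/- arXiv:1803.00271 — 3 statements merged into one kernel-verified Lean document; each statement's English description precedes it below -/
import Mathlib

section
/- Let V be a vector space of odd prime dimension p over an algebraically closed field of characteristic zero, and let T : V → V be a linear map whose order is a power of 2. Then Tr(T) ≠ 0. -/
open Polynomial

open Polynomial

theorem aux_eig {k V : Type*} [Field k] [AddCommGroup V] [Module k V] [FiniteDimensional k V]
    (T : V →ₗ[k] V) (n : ℕ) (hT : T ^ n = 1) (lam : k)
    (h : (LinearMap.charpoly T).IsRoot lam) : lam ^ n = 1 := by
  classical
  let b := Module.finBasis k V
  let M := LinearMap.toMatrix b b T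
  have hchar : M.charpoly = T.charpoly := LinearMap.charpoly_toMatrix T b
  have hscal : (Matrix.scalar (Fin (Module.finrank k V)) lam) = lam • (1 : Matrix _ _ k) := by
    ext i j
    by_cases hij : i = j <;>
      simp [Matrix.scalar_apply, Matrix.one_apply, Matrix.diagonal_apply, hij]
  have hdet0 : LinearMap.det (lam • (1 : V →ₗ[k] V) - T) = 0 := by
    have h1 : M.charpoly.eval lam = 0 := by rw [hchar]; exact h
    have h2 : M.charpoly.eval lam = (Matrix.scalar _ lam - M).det := by
      rw [Matrix.charpoly, _root_.eval_det, Matrix.matPolyEquiv_charmatrix]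
      simp
    rw [h2] at h1
    rw [← LinearMap.det_toMatrix b, map_sub, map_smul, LinearMap.toMatrix_one, ← hscal]
    exact h1
  obtain ⟨v, hv, hv0⟩ := SetLike.exists_of_lt (LinearMap.bot_lt_ker_of_det_eq_zero hdet0)
  rw [LinearMap.mem_ker] at hv
  have hTv : T v = lam • v := by
    have := sub_eq_zero.mp hv
    simpa using this.symm
  have hvne : v ≠ 0 := by simpa using hv0
  have key : ∀ j : ℕ, (T ^ j) v = lam ^ j • v := by
    intro j
    induction j with
    | zero => simp
    | succ j ih =>
      rw [pow_succ, Module.End.mul_apply, hTv, map_smul, ih, smul_smul, pow_succ]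
      ring_nf
  have := key n
  rw [hT] at this
  have h2 : (lam ^ n - 1) • v = 0 := by
    rw [sub_smul, one_smul]
    exact sub_eq_zero.mpr (by simpa using this.symm)
  rcases smul_eq_zero.mp h2 with h3 | h3
  · exact sub_eq_zero.mp h3
  · exact absurd h3 hvne

open Polynomial

theorem aux_sum {k : Type*} [Field k] [IsAlgClosed k] [CharZero k]
    (m p : ℕ) (hp : p.Prime) (hodd : Odd p)
    (S : Multiset k) (hcard : Multiset.card S = p)
    (hS : ∀ x ∈ S, x ^ (2 ^ m) = 1) : S.sum ≠ 0 := by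
  classical
  intro h0
  rcases Nat.eq_zero_or_pos m with rfl | hm
  · have hrep : S = Multiset.replicate p 1 :=
      Multiset.eq_replicate.mpr ⟨hcard, fun x hx => by simpa using hS x hx⟩
    rw [hrep, Multiset.sum_replicate, nsmul_eq_mul, mul_one] at h0
    exact hp.ne_zero (by exact_mod_cast h0)
  · have h2m : 0 < 2 ^ m := Nat.pow_pos (n := m) (by norm_num)
    haveI : NeZero ((2 ^ m : ℕ) : k) := ⟨Nat.cast_ne_zero.mpr h2m.ne'⟩
    obtain ⟨ζ, hζ⟩ := HasEnoughRootsOfUnity.exists_primitiveRoot k (2 ^ m)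
    set g : k → ℕ := fun x => if h : ∃ i, ζ ^ i = x then h.choose else 0 with hg
    have hgx : ∀ x ∈ S, ζ ^ g x = x := by
      intro x hx
      obtain ⟨i, -, hi⟩ := hζ.eq_pow_of_pow_eq_one (hS x hx)
      have hex : ∃ i, ζ ^ i = x := ⟨i, hi⟩
      simp only [hg, dif_pos hex]
      exact hex.choose_spec
    set f : ℤ[X] := (S.map (fun x => (X : ℤ[X]) ^ g x)).sum with hf
    have haeval : Polynomial.aeval ζ f = S.sum := by
      rw [hf, map_multiset_sum, Multiset.map_map]
      congr 1
      rw [Multiset.map_congr rfl (fun x hx => by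
        simp only [Function.comp_apply, map_pow, aeval_X]
        exact hgx x hx)]
      exact Multiset.map_id S
    have heval1 : f.eval 1 = (p : ℤ) := by
      have h1 : f.eval 1 = ((S.map (fun x => (X : ℤ[X]) ^ g x)).map (evalRingHom 1)).sum := by
        rw [hf]; exact map_multiset_sum (evalRingHom 1) _
      rw [h1, Multiset.map_map]
      have h2 : (S.map ((evalRingHom 1 : ℤ[X] →+* ℤ) ∘ fun x => (X : ℤ[X]) ^ g x))
          = S.map (fun _ => (1 : ℤ)) :=
        Multiset.map_congr rfl (fun x hx => by simp)
      rw [h2, Multiset.map_const', Multiset.sum_replicate, hcard]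
      simp
    have hint : IsIntegral ℤ ζ := hζ.isIntegral h2m
    have hdvd : minpoly ℤ ζ ∣ f :=
      minpoly.isIntegrallyClosed_dvd hint (by rw [haeval, h0])
    rw [← Polynomial.cyclotomic_eq_minpoly hζ h2m] at hdvd
    have hdvd1 : (Polynomial.cyclotomic (2 ^ m) ℤ).eval 1 ∣ f.eval 1 := eval_dvd hdvd
    obtain ⟨m', rfl⟩ := Nat.exists_eq_succ_of_ne_zero hm.ne'
    haveI : Fact (Nat.Prime 2) := ⟨Nat.prime_two⟩
    rw [Polynomial.eval_one_cyclotomic_prime_pow, heval1] at hdvd1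
    have h2p : 2 ∣ p := by exact_mod_cast hdvd1
    rw [Nat.odd_iff] at hodd
    omega

/-- If `V` has odd prime dimension `p` over an algebraically closed field of
characteristic zero and `T : V → V` is a linear map whose order is a power of 2,
then `Tr(T) ≠ 0`. -/
theorem stmt9 {k V : Type*} [Field k] [IsAlgClosed k] [CharZero k] [AddCommGroup V]
    [Module k V] [FiniteDimensional k V] (p : ℕ) (hp : p.Prime) (hodd : Odd p)
    (hdim : Module.finrank k V = p) (T : V →ₗ[k] V) (m : ℕ) (hT : T ^ (2 ^ m) = 1) :
    LinearMap.trace k V T ≠ 0 := by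
  classical
  let b := Module.finBasis k V
  let M := LinearMap.toMatrix b b T
  have htr : LinearMap.trace k V T = M.trace := LinearMap.trace_eq_matrix_trace k b T
  have hchar : M.charpoly = T.charpoly := LinearMap.charpoly_toMatrix T b
  have hsum : M.trace = (LinearMap.charpoly T).roots.sum := by
    rw [Matrix.trace_eq_sum_roots_charpoly M, hchar]
  rw [htr, hsum]
  apply aux_sum m p hp hodd
  · rw [splits_iff_card_roots.mp (IsAlgClosed.splits T.charpoly), T.charpoly_natDegree, hdim]
  · intro x hx
    exact aux_eig T (2 ^ m) hT x (isRoot_of_mem_roots hx)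
end

section
/- Let H be a finite-dimensional Hopf algebra over a field k and let λ ∈ H* be a nonzero right integral on H. Suppose H = A ⊕ C as a direct sum of subcoalgebras, where A is a Hopf subalgebra. Then λ vanishes on C and λ restricted to A is a nonzero right integral of A*; moreover the distinguished group-like element of H lies in A. -/
open TensorProduct

/-- Let `H` be a finite-dimensional Hopf algebra, `λ` a nonzero right integral on `H`
(so `h ↼ λ = λ(h)1` for all `h`), with distinguished group-like element `a`
(so `λ ⇀ h = λ(h)a` for all `h`).  Suppose `H = A ⊕ C` is a direct sum of
subcoalgebras where `A` is a Hopf subalgebra.  Then `λ` vanishes on `C`, `λ`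
restricted to `A` is a nonzero right integral of `A*`, and the distinguished
group-like element `a` lies in `A`. -/
theorem stmt12 {k : Type*} [Field k] (H : Type*) [Ring H] [HopfAlgebra k H]
    [FiniteDimensional k H]
    (lam : H →ₗ[k] k) (hlam0 : lam ≠ 0)
    (hint : ∀ h : H, (TensorProduct.lid k H)
        ((TensorProduct.map lam LinearMap.id) (Coalgebra.comul (R := k) h)) =
      lam h • (1 : H))
    (a : H) (ha_grp : Coalgebra.comul (R := k) a = a ⊗ₜ[k] a ∧
      Coalgebra.counit (R := k) a = 1)
    (ha_dist : ∀ h : H, (TensorProduct.rid k H)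
        ((TensorProduct.map LinearMap.id lam) (Coalgebra.comul (R := k) h)) =
      lam h • a)
    (A : Subalgebra k H)
    (hA_comul : ∀ u ∈ A, Coalgebra.comul (R := k) u ∈
      LinearMap.range (TensorProduct.map A.toSubmodule.subtype A.toSubmodule.subtype))
    (hA_antipode : ∀ u ∈ A, HopfAlgebra.antipode (R := k) u ∈ A)
    (C : Submodule k H)
    (hC_comul : ∀ c ∈ C, Coalgebra.comul (R := k) c ∈
      LinearMap.range (TensorProduct.map C.subtype C.subtype))
    (hdecomp : IsCompl A.toSubmodule C) :
    (∀ c ∈ C, lam c = 0) ∧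
      (∃ u ∈ A, lam u ≠ 0) ∧
      (∀ u ∈ A, (TensorProduct.lid k H)
          ((TensorProduct.map lam LinearMap.id) (Coalgebra.comul (R := k) u)) =
        lam u • (1 : H)) ∧
      a ∈ A := by
  -- 1 ≠ 0 in H
  have hone : (1 : H) ≠ 0 := by
    intro h10
    apply hlam0
    ext h
    have : h = 0 := by
      calc h = h * 1 := (mul_one h).symm
        _ = 0 := by rw [h10, mul_zero]
    simp [this]
  -- image of (lam ⊗ id) on C ⊗ C lands in C
  have key1 : ∀ y : C ⊗[k] C, (TensorProduct.lid k H)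
      ((TensorProduct.map lam LinearMap.id)
        ((TensorProduct.map C.subtype C.subtype) y)) ∈ C := by
    intro y
    induction y using TensorProduct.induction_on with
    | zero => simp
    | tmul c c' =>
        simp only [TensorProduct.map_tmul, TensorProduct.lid_tmul, LinearMap.id_coe, id_eq]
        exact C.smul_mem _ c'.2
    | add x y hx hy =>
        simp only [map_add]
        exact C.add_mem hx hy
  -- image of (id ⊗ lam) on A ⊗ A lands in A
  have key2 : ∀ y : A.toSubmodule ⊗[k] A.toSubmodule, (TensorProduct.rid k H)
      ((TensorProduct.map LinearMap.id lam)
        ((TensorProduct.map A.toSubmodule.subtype A.toSubmodule.subtype) y)) ∈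
        A.toSubmodule := by
    intro y
    induction y using TensorProduct.induction_on with
    | zero => simp
    | tmul u u' =>
        simp only [TensorProduct.map_tmul, TensorProduct.rid_tmul, LinearMap.id_coe, id_eq]
        exact A.toSubmodule.smul_mem _ u.2
    | add x y hx hy =>
        simp only [map_add]
        exact A.toSubmodule.add_mem hx hy
  -- λ vanishes on C
  have hvan : ∀ c ∈ C, lam c = 0 := by
    intro c hc
    obtain ⟨y, hy⟩ := hC_comul c hc
    have hmem : (lam c • (1 : H)) ∈ C := by
      rw [← hint c, ← hy]
      exact key1 y
    have hmemA : (lam c • (1 : H)) ∈ A.toSubmodule :=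
      A.toSubmodule.smul_mem _ A.one_mem
    have h0 : lam c • (1 : H) = 0 := by
      have := hdecomp.disjoint
      exact (Submodule.disjoint_def.mp this) _ hmemA hmem
    by_contra hne
    exact hone (by simpa [smul_eq_zero, hne] using h0)
  -- λ is nonzero on A
  have hexu : ∃ u ∈ A, lam u ≠ 0 := by
    by_contra hcon
    push_neg at hcon
    apply hlam0
    ext h
    obtain ⟨u, c, hu, hc, huc⟩ :=
      Submodule.codisjoint_iff_exists_add_eq.mp hdecomp.codisjoint h
    have : lam h = lam u + lam c := by rw [← huc]; simp
    rw [LinearMap.zero_apply, this, hvan c hc, hcon u hu, add_zero]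
  refine ⟨hvan, hexu, fun u _ => hint u, ?_⟩
  -- a ∈ A
  obtain ⟨u, hu, hlu⟩ := hexu
  obtain ⟨y, hy⟩ := hA_comul u hu
  have hmem : (lam u • a) ∈ A.toSubmodule := by
    rw [← ha_dist u, ← hy]
    exact key2 y
  have : ((lam u)⁻¹ • (lam u • a)) ∈ A.toSubmodule :=
    A.toSubmodule.smul_mem _ hmem
  rwa [smul_smul, inv_mul_cancel₀ hlu, one_smul] at this
end

section
/- Let p be an odd prime, ξ a primitive 2p-th root of unity, and consider the 2-dimensional modules U_i (i ∈ ℤ/2p) over the algebra A generated by commuting a, x and an element z with ax = xa, az = za, xz = -zx, a² = 1, x^{2p} = 1, z² = a - 1, where the action on basis u₁, u₂ of U_i is: a·u_j = -u_j, x·u_j = (-1)^{j-1} ξ^i u_j, z·u₁ = u₂, z·u₂ = -2u₁. Then each U_i is a simple A-module. -/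
/-- Let `A` be the algebra generated by `a, x, z` with `a² = 1`, `x^{2p} = 1`,
`z² = a - 1`, `ax = xa`, `az = za`, `xz = -zx` (over an algebraically closed field of
characteristic zero, `p` an odd prime, `ξ` a primitive `2p`-th root of unity).
The 2-dimensional module `U_i` with basis `u₀, u₁` and action
`a·u_j = -u_j`, `x·u₀ = ξ^i u₀`, `x·u₁ = -ξ^i u₁`, `z·u₀ = u₁`, `z·u₁ = -2u₀`
is a simple `A`-module. -/
theorem stmt16 {k : Type*} [Field k] [IsAlgClosed k] [CharZero k]
    (p : ℕ) (hp : p.Prime) (hodd : Odd p) (ξ : k) (hξ : IsPrimitiveRoot ξ (2 * p))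
    (A : Type*) [Ring A] [Algebra k A] (a x z : A)
    (h1 : a * a = 1) (h2 : x ^ (2 * p) = 1) (h3 : z * z = a - 1)
    (h4 : a * x = x * a) (h5 : a * z = z * a) (h6 : x * z = -(z * x))
    (i : ℕ) (U : Type*) [AddCommGroup U] [Module k U] [Module A U]
    [IsScalarTower k A U] (u : Module.Basis (Fin 2) k U)
    (ha : ∀ j, a • u j = -u j)
    (hx0 : x • u 0 = ξ ^ i • u 0) (hx1 : x • u 1 = (-(ξ ^ i)) • u 1)
    (hz0 : z • u 0 = u 1) (hz1 : z • u 1 = ((-2 : k)) • u 0) :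
    IsSimpleModule A U := by
  have hξ0 : ξ ≠ 0 := hξ.ne_zero (Nat.mul_pos two_pos hp.pos).ne'
  have hxi : ξ ^ i ≠ 0 := pow_ne_zero _ hξ0
  -- k-scalar multiplication preserves A-submodules
  have kmem : ∀ (N : Submodule A U) (c : k) (v : U), v ∈ N → c • v ∈ N := by
    intro N c v hv
    rw [← algebraMap_smul A c v]
    exact N.smul_mem _ hv
  -- A-smul commutes with k-smul
  have hcomm : ∀ (b : A) (c : k) (v : U), b • (c • v) = c • (b • v) := by
    intro b c v
    rw [← algebraMap_smul A c v, ← algebraMap_smul A c (b • v), smul_smul, smul_smul,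
      Algebra.commutes]
  have hu0 : u 0 ≠ 0 := u.ne_zero 0
  haveI : Nontrivial (Submodule A U) :=
    ⟨⊥, ⊤, fun h => hu0 (by simpa using (h ▸ Submodule.mem_top : u 0 ∈ (⊥ : Submodule A U)))⟩
  rw [isSimpleModule_iff]; constructor
  intro N
  · rcases eq_or_ne N ⊥ with hN | hN
    · exact Or.inl hN
    right
    obtain ⟨v, hvN, hv0⟩ := Submodule.exists_mem_ne_zero_of_ne_bot hN
    set c0 := u.repr v 0 with hc0
    set c1 := u.repr v 1 with hc1
    have hv : c0 • u 0 + c1 • u 1 = v := by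
      have := u.sum_repr v
      rwa [Fin.sum_univ_two] at this
    have hu1N_of : u 0 ∈ N → u 1 ∈ N := fun h => hz0 ▸ N.smul_mem z h
    have hu0N_of : u 1 ∈ N → u 0 ∈ N := by
      intro h
      have h2' : ((-2 : k)) • u 0 ∈ N := hz1 ▸ N.smul_mem z h
      have := kmem N ((-2 : k))⁻¹ _ h2'
      rwa [smul_smul, inv_mul_cancel₀ (by norm_num : (-2 : k) ≠ 0), one_smul] at this
    have hboth : u 0 ∈ N ∧ u 1 ∈ N := by
      by_cases hc : c0 = 0
      · -- then c1 ≠ 0 and v = c1 • u 1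
        have hc1ne : c1 ≠ 0 := by
          intro h
          apply hv0
          rw [← hv, hc, h, zero_smul, zero_smul, add_zero]
        have hv' : v = c1 • u 1 := by rw [← hv, hc, zero_smul, zero_add]
        have : c1⁻¹ • v ∈ N := kmem N _ _ hvN
        rw [hv', smul_smul, inv_mul_cancel₀ hc1ne, one_smul] at this
        exact ⟨hu0N_of this, this⟩
      · -- project onto u 0 : x • v + ξ^i • v = (2 ξ^i c0) • u 0
        have hxv : x • v = (c0 * ξ ^ i) • u 0 + (c1 * (-(ξ ^ i))) • u 1 := by
          rw [← hv, smul_add, hcomm, hcomm, hx0, hx1, smul_smul, smul_smul]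
        have hw : x • v + (ξ ^ i) • v = (2 * ξ ^ i * c0) • u 0 := by
          rw [hxv, ← hv]
          module
        have hwN : x • v + (ξ ^ i) • v ∈ N :=
          N.add_mem (N.smul_mem x hvN) (kmem N _ _ hvN)
        rw [hw] at hwN
        have hne : (2 * ξ ^ i * c0) ≠ 0 := by
          apply mul_ne_zero (mul_ne_zero (by norm_num) hxi) hc
        have := kmem N (2 * ξ ^ i * c0)⁻¹ _ hwN
        rw [smul_smul, inv_mul_cancel₀ hne, one_smul] at this
        exact ⟨this, hu1N_of this⟩
    -- N contains both basis vectors, so N = ⊤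
    rw [eq_top_iff]
    intro w _
    have hw : (u.repr w 0) • u 0 + (u.repr w 1) • u 1 = w := by
      have := u.sum_repr w
      rwa [Fin.sum_univ_two] at this
    rw [← hw]
    exact N.add_mem (kmem N _ _ hboth.1) (kmem N _ _ hboth.2)
end
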